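/- Let 0 ≤ k ≤ n be integers, S = {s_1 < … < s_k} ∈ {n;k}, and let Θ = (θ_{(i,j)})_{(i,j) ∈ Z_S} be any family of real numbers. Let M := (Π_{(i,j) ∈ Z_S} R_j(θ_{(i,j)})) · 1_{n×k}, where the matrix product is taken in the total order of Z_S. Then for every 1 ≤ i ≤ k and every j with s_i < j ≤ n, the (j, i) entry of M is 0. -/

import Mathlib

open scoped BigOperators

/-- `{n;k}`: the set of subsets of `{1,…,n}` of cardinality `k`. -/
def Sset (n k : ℕ) : Finset (Finset ℕ) := (Finset.Icc 1 n).powersetCard k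

/-- `elt S r` is `s_r`, the `r`-th smallest element of `S` (1-indexed); junk value `0` out of range. -/
def elt (S : Finset ℕ) (r : ℕ) : ℕ := (S.sort (· ≤ ·)).getD (r - 1) 0

/-- `R_j(θ)`: the `n×n` rotation by angle `θ` of the oriented `(j, j+1)`-coordinate plane of
`ℝ^n` (coordinates labelled `1,…,n`), the identity on all other coordinates. -/
noncomputable def Rmat (n : ℕ) (j : ℕ) (θ : ℝ) : Matrix (Fin n) (Fin n) ℝ :=
  fun a b =>
    if (a : ℕ) + 1 = j ∧ (b : ℕ) + 1 = j then Real.cos θ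
    else if (a : ℕ) + 1 = j ∧ (b : ℕ) = j then -Real.sin θ
    else if (a : ℕ) = j ∧ (b : ℕ) + 1 = j then Real.sin θ
    else if (a : ℕ) = j ∧ (b : ℕ) = j then Real.cos θ
    else if a = b then 1 else 0

/-- `Z_S = {(i,j) : 1 ≤ i ≤ k, i ≤ j ≤ s_i − 1}` as a list, enumerated in its total order:
`(i,j) ≤ (i′,j′)` iff `i < i′`, or `i = i′` and `j ≥ j′`. -/
def ZS (S : Finset ℕ) (k : ℕ) : List (ℕ × ℕ) :=
  (List.range k).flatMap fun i' =>
    (List.range (elt S (i' + 1) - (i' + 1))).map fun t => (i' + 1, elt S (i' + 1) - 1 - t)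

/-- The first `k` columns of the `n×n` identity matrix. -/
def onesNK (n k : ℕ) : Matrix (Fin n) (Fin k) ℝ :=
  fun a b => if (a : ℕ) = (b : ℕ) then 1 else 0

/-- The product `(Π_{(i,j) ∈ Z_S} R_j(θ_{(i,j)})) · 1_{n×k}`, taken in the total order of `Z_S`. -/
noncomputable def rotMat (n k : ℕ) (S : Finset ℕ) (Θ : ℕ × ℕ → ℝ) :
    Matrix (Fin n) (Fin k) ℝ :=
  ((ZS S k).map fun p => Rmat n p.2 (Θ p)).prod * onesNK n k

/-- for every `1 ≤ i ≤ k` and every `j` with `s_i < j ≤ n`, the `(j, i)` entry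
(1-indexed) of the matrix `M = (Π_{(i,j) ∈ Z_S} R_j(θ_{(i,j)})) · 1_{n×k}` is `0`.
Here the row index is `a` with `j = a + 1` and the column index is `b` with `i = b + 1`. -/
-- auxiliary lemmas

lemma Rmat_row_id {n j : ℕ} (θ : ℝ) {a : Fin n} (b : Fin n)
    (h1 : (a : ℕ) + 1 ≠ j) (h2 : (a : ℕ) ≠ j) :
    Rmat n j θ a b = if a = b then 1 else 0 := by
  simp [Rmat, h1, h2]

lemma Rmat_col_id {n j : ℕ} (θ : ℝ) (a : Fin n) {b : Fin n}
    (h1 : (b : ℕ) + 1 ≠ j) (h2 : (b : ℕ) ≠ j) :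
    Rmat n j θ a b = if a = b then 1 else 0 := by
  simp [Rmat, h1, h2]

lemma prod_row {n : ℕ} (Θ : ℕ × ℕ → ℝ) (c : ℕ) :
    ∀ (L : List (ℕ × ℕ)), (∀ p ∈ L, p.2 < c) → ∀ (a b : Fin n), c ≤ (a : ℕ) →
    ((L.map fun p => Rmat n p.2 (Θ p)).prod) a b = if a = b then 1 else 0
  | [], _, a, b, ha => by simp [Matrix.one_apply]
  | p :: L, hL, a, b, ha => by
    have hp := hL p (List.mem_cons_self)
    rw [List.map_cons, List.prod_cons, Matrix.mul_apply]
    rw [Finset.sum_eq_single a]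
    · rw [Rmat_row_id _ _ (by omega) (by omega), if_pos rfl, one_mul]
      exact prod_row Θ c L (fun q hq => hL q (List.mem_cons_of_mem _ hq)) a b ha
    · intro x _ hx
      rw [Rmat_row_id _ _ (by omega) (by omega), if_neg (fun he => hx he.symm), zero_mul]
    · simp
  termination_by L => L.length

lemma prod_col {n k : ℕ} (Θ : ℕ × ℕ → ℝ) (b : Fin k) (b' : Fin n) :
    ∀ (L : List (ℕ × ℕ)), (∀ p ∈ L, (b' : ℕ) + 2 ≤ p.2) →
    ∀ (Q : Matrix (Fin n) (Fin k) ℝ), (∀ x, Q x b = if x = b' then 1 else 0) →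
    ∀ x, (((L.map fun p => Rmat n p.2 (Θ p)).prod) * Q) x b = if x = b' then 1 else 0
  | [], _, Q, hQ, x => by simpa using hQ x
  | p :: L, hL, Q, hQ, x => by
    have hp := hL p (List.mem_cons_self)
    have hrest := prod_col Θ b b' L (fun q hq => hL q (List.mem_cons_of_mem _ hq)) Q hQ
    rw [List.map_cons, List.prod_cons, Matrix.mul_assoc, Matrix.mul_apply]
    rw [Finset.sum_eq_single b']
    · rw [hrest b', if_pos rfl, mul_one]
      exact Rmat_col_id _ _ (by omega) (by omega)
    · intro y _ hy
      rw [hrest y, if_neg hy, mul_zero]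
    · simp
  termination_by L => L.length

lemma sorted_getD_ge :
    ∀ (l : List ℕ) (c : ℕ), l.Pairwise (· < ·) → (∀ x ∈ l, c ≤ x) →
    ∀ i, i < l.length → c + i ≤ l.getD i 0
  | [], c, _, _, i, h => absurd h (by simp)
  | x :: l, c, hs, hc, 0, h => by simpa using hc x (List.mem_cons_self)
  | x :: l, c, hs, hc, i + 1, h => by
    obtain ⟨hx, hl⟩ := List.pairwise_cons.mp hs
    have hc' : ∀ y ∈ l, c + 1 ≤ y := fun y hy =>
      Nat.succ_le_of_lt (lt_of_le_of_lt (hc x (List.mem_cons_self)) (hx y hy))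
    have := sorted_getD_ge l (c + 1) hl hc' i (by simpa using Nat.lt_of_succ_lt_succ h)
    rw [List.getD_cons_succ]
    omega

lemma sorted_getD_mono (l : List ℕ) (hs : l.Pairwise (· ≤ ·)) (i j : ℕ) (hij : i ≤ j)
    (hj : j < l.length) : l.getD i 0 ≤ l.getD j 0 := by
  rw [List.getD_eq_getElem l 0 (lt_of_le_of_lt hij hj), List.getD_eq_getElem l 0 hj]
  exact List.Pairwise.rel_get_of_le hs (by simpa using hij)

theorem stmt15 (n k : ℕ) (hk : k ≤ n) (S : Finset ℕ) (hS : S ∈ Sset n k)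
    (Θ : ℕ × ℕ → ℝ) (a : Fin n) (b : Fin k)
    (h : elt S ((b : ℕ) + 1) < (a : ℕ) + 1) :
    rotMat n k S Θ a b = 0 := by
  rw [Sset, Finset.mem_powersetCard] at hS
  obtain ⟨hsub, hcard⟩ := hS
  set l : List ℕ := S.sort (· ≤ ·) with hl
  have hlen : l.length = k := by rw [hl, Finset.length_sort, hcard]
  have hslt : l.Pairwise (· < ·) := S.sortedLT_sort.pairwise
  have h1le : ∀ x ∈ l, 1 ≤ x := fun x hx =>
    (Finset.mem_Icc.mp (hsub ((Finset.mem_sort _).mp hx))).1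
  have helt : ∀ i : ℕ, elt S (i + 1) = l.getD i 0 := by
    intro i
    rw [elt, ← hl, Nat.add_sub_cancel]
  have hget : ∀ i, i < k → i + 1 ≤ elt S (i + 1) := by
    intro i hi
    rw [helt i]
    have := sorted_getD_ge l 1 hslt h1le i (by omega)
    omega
  have hmono : ∀ i j : ℕ, i ≤ j → j < k → elt S (i + 1) ≤ elt S (j + 1) := by
    intro i j hij hj
    rw [helt i, helt j]
    exact sorted_getD_mono l (S.pairwise_sort _) i j hij (by omega)
  set c : ℕ := elt S ((b : ℕ) + 1) with hc
  have hca : c ≤ (a : ℕ) := by omega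
  have hcb : (b : ℕ) + 1 ≤ c := hget b b.isLt
  have hk' : (b : ℕ) + 1 + (k - ((b : ℕ) + 1)) = k := by have := b.isLt; omega
  obtain ⟨L2, hZ, hL2⟩ : ∃ L2 : List (ℕ × ℕ),
      ZS S k = ZS S ((b : ℕ) + 1) ++ L2 ∧ ∀ p ∈ L2, (b : ℕ) + 2 ≤ p.2 := by
    refine ⟨(List.range (k - ((b : ℕ) + 1))).flatMap fun i' =>
      (List.range (elt S ((b : ℕ) + 1 + i' + 1) - ((b : ℕ) + 1 + i' + 1))).map fun t =>
        ((b : ℕ) + 1 + i' + 1, elt S ((b : ℕ) + 1 + i' + 1) - 1 - t), ?_, ?_⟩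
    · simp only [ZS]
      conv_lhs => rw [← hk']
      rw [List.range_add, List.flatMap_append, List.flatMap_map]
    · intro p hp
      simp only [List.mem_flatMap, List.mem_map, List.mem_range] at hp
      obtain ⟨i', hi', t, ht, rfl⟩ := hp
      simp only
      omega
  have hL1 : ∀ p ∈ ZS S ((b : ℕ) + 1), p.2 < c := by
    intro p hp
    simp only [ZS, List.mem_flatMap, List.mem_map, List.mem_range] at hp
    obtain ⟨i', hi', t, ht, rfl⟩ := hp
    have hm : elt S (i' + 1) ≤ elt S ((b : ℕ) + 1) := hmono i' b (by omega) b.isLt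
    simp only
    omega
  have hbn : (b : ℕ) < n := lt_of_lt_of_le b.isLt hk
  set b' : Fin n := ⟨b, hbn⟩ with hb'
  have hQ : ∀ x, onesNK n k x b = if x = b' then 1 else 0 := by
    intro x
    simp [onesNK, Fin.ext_iff, hb']
  have hcol := prod_col Θ b b' L2 (by simpa using hL2) (onesNK n k) hQ
  rw [rotMat, hZ, List.map_append, List.prod_append, Matrix.mul_assoc, Matrix.mul_apply]
  rw [Finset.sum_eq_single b']
  · rw [hcol b', if_pos rfl, mul_one]
    rw [prod_row Θ c (ZS S ((b : ℕ) + 1)) hL1 a b' hca]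
    rw [if_neg]
    intro he
    have : (a : ℕ) = (b : ℕ) := by rw [he]
    omega
  · intro y _ hy
    rw [hcol y, if_neg hy, mul_zero]
  · simp
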